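/- Let G be a simple graph, u, v vertices of G, and G' = G[u→v] the graph obtained by the Kelmans operation. For every integer r ≥ 1, the number of copies of the star K_{1,r} in G' is at least the number of copies of K_{1,r} in G, where the number of copies of K_{1,r} equals ∑_{w ∈ V(G)} C(deg(w), r). -/

import Mathlib

/-- The Kelmans operation `G[u → v]`: every edge `wu` with `w ∈ N(u) \\ N[v]` is removed
and replaced by the edge `wv`. -/
def kelmans {V : Type*} (G : SimpleGraph V) (u v : V) : SimpleGraph V where
  Adj x y := x ≠ y ∧
    ((G.Adj x y ∧ ¬ ((x = u ∧ G.Adj u y ∧ ¬ G.Adj v y ∧ y ≠ v) ∨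
                     (y = u ∧ G.Adj u x ∧ ¬ G.Adj v x ∧ x ≠ v))) ∨
     ((x = v ∧ G.Adj u y ∧ ¬ G.Adj v y ∧ y ≠ v) ∨
      (y = v ∧ G.Adj u x ∧ ¬ G.Adj v x ∧ x ≠ v)))
  symm := by
    constructor
    rintro x y ⟨hxy, h⟩
    refine ⟨hxy.symm, ?_⟩
    have hsymm : G.Adj x y ↔ G.Adj y x := ⟨SimpleGraph.Adj.symm, SimpleGraph.Adj.symm⟩
    tauto
  loopless := by constructor; rintro x ⟨h, -⟩; exact h rfl

private lemma kelmans_key (c b : ℕ) (h : c ≤ b) (r : ℕ) :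
    ∀ k, (c+k).choose r + b.choose r ≤ c.choose r + (b+k).choose r := by
  intro k
  induction k with
  | zero => simp
  | succ k ih =>
    cases r with
    | zero => simp
    | succ s =>
      have h1 : (c+k).choose s ≤ (b+k).choose s := Nat.choose_le_choose _ (by omega)
      have e1 : (c+(k+1)).choose (s+1) = (c+k).choose s + (c+k).choose (s+1) := by
        rw [show c+(k+1) = (c+k)+1 from rfl, Nat.choose_succ_succ]
      have e2 : (b+(k+1)).choose (s+1) = (b+k).choose s + (b+k).choose (s+1) := by
        rw [show b+(k+1) = (b+k)+1 from rfl, Nat.choose_succ_succ]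
      omega

section
variable {V : Type*} (G : SimpleGraph V) (u v : V)

private lemma kelmans_self : kelmans G u u = G := by
  ext x y
  simp only [kelmans]
  constructor
  · rintro ⟨hxy, h⟩; tauto
  · intro h; exact ⟨h.ne, Or.inl ⟨h, by tauto⟩⟩

private lemma kelmans_claim2 (huv : u ≠ v) : (kelmans G u v).neighborSet u =
    G.neighborSet u \ {w | G.Adj u w ∧ ¬ G.Adj v w ∧ w ≠ v} := by
  ext x
  simp only [SimpleGraph.mem_neighborSet, kelmans, Set.mem_diff, Set.mem_setOf_eq]
  have h1 : ¬ G.Adj u u := G.loopless.irrefl u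
  have h2 : ∀ h : G.Adj u x, u ≠ x := fun h => h.ne
  tauto

private lemma kelmans_claim3 (huv : u ≠ v) : (kelmans G u v).neighborSet v =
    G.neighborSet v ∪ {w | G.Adj u w ∧ ¬ G.Adj v w ∧ w ≠ v} := by
  ext x
  simp only [SimpleGraph.mem_neighborSet, kelmans, Set.mem_union, Set.mem_setOf_eq]
  have h1 : ∀ h : G.Adj v x, v ≠ x := fun h => h.ne
  have h2 : ¬ G.Adj v v := G.loopless.irrefl v
  tauto

private lemma kelmans_claim1 [Fintype V] {w : V} (hwu : w ≠ u) (hwv : w ≠ v) :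
    ((kelmans G u v).neighborSet w).ncard = (G.neighborSet w).ncard := by
  classical
  by_cases hS : G.Adj u w ∧ ¬ G.Adj v w
  · have hset : (kelmans G u v).neighborSet w = insert v (G.neighborSet w \ {u}) := by
      ext x
      simp only [SimpleGraph.mem_neighborSet, kelmans, Set.mem_insert_iff, Set.mem_diff,
        Set.mem_singleton_iff]
      have e1 : G.Adj w u ↔ G.Adj u w := ⟨SimpleGraph.Adj.symm, SimpleGraph.Adj.symm⟩
      have e2 : G.Adj w v ↔ G.Adj v w := ⟨SimpleGraph.Adj.symm, SimpleGraph.Adj.symm⟩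
      constructor
      · rintro ⟨hwx, h⟩; tauto
      · rintro (rfl | ⟨hx, hxu⟩)
        · exact ⟨hwv, Or.inr (Or.inr ⟨rfl, hS.1, hS.2, hwv⟩)⟩
        · exact ⟨hx.ne, Or.inl ⟨hx, by tauto⟩⟩
    rw [hset]
    have hvw : v ∉ G.neighborSet w \ {u} := by
      simp only [Set.mem_diff, SimpleGraph.mem_neighborSet, Set.mem_singleton_iff]
      exact fun h => hS.2 h.1.symm
    rw [Set.ncard_insert_of_notMem hvw (Set.toFinite _)]
    exact Set.ncard_diff_singleton_add_one hS.1.symm (Set.toFinite _)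
  · have hset : (kelmans G u v).neighborSet w = G.neighborSet w := by
      ext x
      simp only [SimpleGraph.mem_neighborSet, kelmans]
      have e1 : G.Adj w u ↔ G.Adj u w := ⟨SimpleGraph.Adj.symm, SimpleGraph.Adj.symm⟩
      constructor
      · rintro ⟨hwx, h⟩; tauto
      · intro h; exact ⟨h.ne, Or.inl ⟨h, by tauto⟩⟩
    rw [hset]

end

/-- The number of copies of the star `K_{1,r}`, i.e. `∑_w C(deg w, r)`,
does not decrease under the Kelmans operation. -/
theorem stmt_4 {V : Type*} [Fintype V] (G : SimpleGraph V) (u v : V) (r : ℕ) (hr : 1 ≤ r) :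
    ∑ w : V, Nat.choose ((G.neighborSet w).ncard) r ≤
      ∑ w : V, Nat.choose (((kelmans G u v).neighborSet w).ncard) r := by
  classical
  by_cases huv : u = v
  · subst huv
    rw [kelmans_self]
  set G' := kelmans G u v with hG'
  set S : Set V := {w | G.Adj u w ∧ ¬ G.Adj v w ∧ w ≠ v} with hS
  set k := S.ncard with hk
  set b := (G.neighborSet v).ncard with hb
  set c := (G.neighborSet u \ S).ncard with hc
  have hSsub : S ⊆ G.neighborSet u := fun x hx => hx.1
  have hak : (G.neighborSet u).ncard = c + k :=
    (Set.ncard_diff_add_ncard_of_subset hSsub (Set.toFinite _)).symm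
  have hdisj : Disjoint (G.neighborSet v) S := by
    rw [Set.disjoint_left]
    exact fun x hx hxS => hxS.2.1 hx
  have hcu : (G'.neighborSet u).ncard = c := by rw [hG', kelmans_claim2 G u v huv]
  have hcv : (G'.neighborSet v).ncard = b + k := by
    rw [hG', kelmans_claim3 G u v huv,
      Set.ncard_union_eq hdisj (Set.toFinite _) (Set.toFinite _)]
  have hcb : c ≤ b := by
    by_cases hadj : G.Adj u v
    · have hsub : G.neighborSet u \ S ⊆ insert v (G.neighborSet v \ {u}) := by
        rintro x ⟨hx, hxS⟩
        simp only [hS, Set.mem_setOf_eq, not_and, not_not] at hxS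
        by_cases hvx : G.Adj v x
        · exact Or.inr ⟨hvx, fun h => G.loopless.irrefl u (h ▸ hx)⟩
        · exact Or.inl (hxS hx hvx)
      calc c ≤ (insert v (G.neighborSet v \ {u})).ncard :=
            Set.ncard_le_ncard hsub (Set.toFinite _)
        _ = (G.neighborSet v \ {u}).ncard + 1 := by
            refine Set.ncard_insert_of_notMem ?_ (Set.toFinite _)
            rintro ⟨h, -⟩; exact G.loopless.irrefl v h
        _ = b := Set.ncard_diff_singleton_add_one hadj.symm (Set.toFinite _)
    · have hsub : G.neighborSet u \ S ⊆ G.neighborSet v := by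
        rintro x ⟨hx, hxS⟩
        simp only [hS, Set.mem_setOf_eq, not_and, not_not] at hxS
        by_cases hvx : G.Adj v x
        · exact hvx
        · exact absurd ((hxS hx hvx) ▸ hx) hadj
      exact Set.ncard_le_ncard hsub (Set.toFinite _)
  have hpair : ({u, v} : Finset V) ⊆ Finset.univ := Finset.subset_univ _
  rw [← Finset.sum_sdiff (f := fun w => Nat.choose ((G.neighborSet w).ncard) r) hpair,
      ← Finset.sum_sdiff (f := fun w => Nat.choose ((G'.neighborSet w).ncard) r) hpair]
  refine Nat.add_le_add (le_of_eq ?_) ?_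
  · refine Finset.sum_congr rfl fun w hw => ?_
    simp only [Finset.mem_sdiff, Finset.mem_insert, Finset.mem_singleton] at hw
    rw [hG', kelmans_claim1 G u v (fun h => hw.2 (Or.inl h)) (fun h => hw.2 (Or.inr h))]
  · rw [Finset.sum_pair huv, Finset.sum_pair huv, hcu, hcv, hak]
    exact kelmans_key c b hcb r k
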